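/- arXiv:2307.06665 — 2 statements merged into one kernel-verified Lean document; each statement's English description precedes it below -/
import Mathlib

section
/- For a nonzero Schwartz function f on ℝ^d with ‖f‖₂ = 1, the partial derivative of β ↦ ‖|x|^{-β} f‖_{L^p} evaluated at p = 2 and β = 0 equals −∫_{ℝ^d} |f(x)|² log|x| dx. -/
open MeasureTheory Real Filter ENNReal

lemma aux_int_ball {d : ℕ} (hd : 0 < d) :
    IntegrableOn (fun x : EuclideanSpace ℝ (Fin d) => ‖x‖ ^ (-(1/2) : ℝ))
      (Metric.ball 0 1) volume := by
  have hmeas : Measurable fun x : EuclideanSpace ℝ (Fin d) => ‖x‖ ^ (-(1/2) : ℝ) := by fun_prop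
  constructor
  · exact hmeas.aestronglyMeasurable
  · rw [hasFiniteIntegral_iff_ofReal (Eventually.of_forall fun x =>
      Real.rpow_nonneg (norm_nonneg _) _)]
    rw [lintegral_eq_lintegral_meas_le _ (Eventually.of_forall fun x =>
      Real.rpow_nonneg (norm_nonneg _) _) hmeas.aemeasurable]
    refine lt_of_le_of_lt (lintegral_mono_set (Set.Ioi_subset_Ioc_union_Ioi (b := 1))) ?_
    refine lt_of_le_of_lt (lintegral_union_le _ _ _) ?_
    refine ENNReal.add_lt_top.2 ⟨?_, ?_⟩
    · calc ∫⁻ t in Set.Ioc (0:ℝ) 1,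
            (volume.restrict (Metric.ball (0:EuclideanSpace ℝ (Fin d)) 1))
              {a | t ≤ ‖a‖ ^ (-(1/2) : ℝ)}
          ≤ ∫⁻ _ in Set.Ioc (0:ℝ) 1,
              volume (Metric.ball (0:EuclideanSpace ℝ (Fin d)) 1) := by
            refine setLIntegral_mono' measurableSet_Ioc fun t _ => ?_
            exact le_trans (measure_mono (Set.subset_univ _))
              (le_of_eq (Measure.restrict_apply_univ _))
        _ < ∞ := by
            rw [setLIntegral_const]
            exact ENNReal.mul_lt_top measure_ball_lt_top (by simp)
    · have hstep : ∀ t ∈ Set.Ioi (1:ℝ),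
          (volume.restrict (Metric.ball (0:EuclideanSpace ℝ (Fin d)) 1))
            {a | t ≤ ‖a‖ ^ (-(1/2) : ℝ)}
          ≤ ENNReal.ofReal (t ^ ((-2:ℝ) * d)) *
              volume (Metric.ball (0:EuclideanSpace ℝ (Fin d)) 1) := by
        intro t ht
        have ht1 : (1:ℝ) < t := ht
        have ht0 : (0:ℝ) < t := lt_trans one_pos ht1
        have hsub2 : {a : EuclideanSpace ℝ (Fin d) | t ≤ ‖a‖ ^ (-(1/2) : ℝ)}
            ⊆ Metric.closedBall 0 (t ^ (-(2:ℝ))) := by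
          intro a ha
          simp only [Set.mem_setOf_eq] at ha
          have hna : (0:ℝ) < ‖a‖ := by
            rcases eq_or_lt_of_le (norm_nonneg a) with h | h
            · exfalso
              rw [← h, Real.zero_rpow (by norm_num : (-(1/2):ℝ) ≠ 0)] at ha
              linarith
            · exact h
          rw [Metric.mem_closedBall, dist_zero_right]
          have h2 : (‖a‖ ^ (-(1/2):ℝ)) ^ (-(2:ℝ)) ≤ t ^ (-(2:ℝ)) :=
            Real.rpow_le_rpow_of_nonpos ht0 ha (by norm_num)
          calc ‖a‖ = (‖a‖ ^ (-(1/2):ℝ)) ^ (-(2:ℝ)) := by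
                rw [← Real.rpow_mul (norm_nonneg a)]; norm_num
            _ ≤ t ^ (-(2:ℝ)) := h2
        calc (volume.restrict (Metric.ball (0:EuclideanSpace ℝ (Fin d)) 1))
              {a | t ≤ ‖a‖ ^ (-(1/2) : ℝ)}
            ≤ volume {a : EuclideanSpace ℝ (Fin d) | t ≤ ‖a‖ ^ (-(1/2) : ℝ)} :=
              Measure.restrict_le_self _
          _ ≤ volume (Metric.closedBall (0:EuclideanSpace ℝ (Fin d)) (t ^ (-(2:ℝ)))) :=
              measure_mono hsub2
          _ = ENNReal.ofReal ((t ^ (-(2:ℝ))) ^ Module.finrank ℝ (EuclideanSpace ℝ (Fin d))) *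
              volume (Metric.ball (0:EuclideanSpace ℝ (Fin d)) 1) :=
              Measure.addHaar_closedBall _ _ (Real.rpow_nonneg ht0.le _)
          _ = ENNReal.ofReal (t ^ ((-2:ℝ) * d)) *
              volume (Metric.ball (0:EuclideanSpace ℝ (Fin d)) 1) := by
              congr 2
              rw [← Real.rpow_natCast (t ^ (-(2:ℝ))) _, ← Real.rpow_mul ht0.le,
                finrank_euclideanSpace_fin]
      calc ∫⁻ t in Set.Ioi (1:ℝ),
            (volume.restrict (Metric.ball (0:EuclideanSpace ℝ (Fin d)) 1))
              {a | t ≤ ‖a‖ ^ (-(1/2) : ℝ)}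
          ≤ ∫⁻ t in Set.Ioi (1:ℝ), ENNReal.ofReal (t ^ ((-2:ℝ) * d)) *
              volume (Metric.ball (0:EuclideanSpace ℝ (Fin d)) 1) :=
            setLIntegral_mono' measurableSet_Ioi hstep
        _ = (∫⁻ t in Set.Ioi (1:ℝ), ENNReal.ofReal (t ^ ((-2:ℝ) * d))) *
              volume (Metric.ball (0:EuclideanSpace ℝ (Fin d)) 1) :=
            lintegral_mul_const' _ _ measure_ball_lt_top.ne
        _ < ∞ := by
            refine ENNReal.mul_lt_top ?_ measure_ball_lt_top
            have : ((-2:ℝ) * d) < -1 := by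
              have : (1:ℝ) ≤ d := by exact_mod_cast hd
              nlinarith
            exact (integrableOn_Ioi_rpow_of_lt this one_pos).setLIntegral_lt_top

lemma aux_ptwise {s β : ℝ} (hs : 0 < s) (hβ : |β| < 1/8) :
    s ^ (-β * 2) * (2 * |Real.log s|) ≤ 8 * (s ^ ((1:ℝ)/2) + s ^ (-(1/2) : ℝ)) := by
  have hβ' := abs_lt.mp hβ
  rcases le_or_gt 1 s with hs1 | hs1
  · have h1 : s ^ (-β * 2) ≤ s ^ ((1:ℝ)/4) :=
      Real.rpow_le_rpow_of_exponent_le hs1 (by nlinarith)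
    have h2 : |Real.log s| ≤ 4 * s ^ ((1:ℝ)/4) := by
      rw [abs_of_nonneg (Real.log_nonneg hs1)]
      have := Real.log_le_rpow_div hs.le (by norm_num : (0:ℝ) < 1/4)
      linarith
    have hmul : s ^ (-β * 2) * (2 * |Real.log s|) ≤ s ^ ((1:ℝ)/4) * (8 * s ^ ((1:ℝ)/4)) := by
      have := mul_le_mul h1 (by linarith : 2 * |Real.log s| ≤ 8 * s ^ ((1:ℝ)/4))
        (by positivity) (Real.rpow_nonneg hs.le _)
      linarith
    have hsq : s ^ ((1:ℝ)/4) * s ^ ((1:ℝ)/4) = s ^ ((1:ℝ)/2) := by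
      rw [← Real.rpow_add hs]; norm_num
    have hpos : 0 ≤ s ^ (-(1/2) : ℝ) := Real.rpow_nonneg hs.le _
    nlinarith [Real.rpow_nonneg hs.le ((1:ℝ)/4)]
  · have h1 : s ^ (-β * 2) ≤ s ^ (-(1/4) : ℝ) :=
      Real.rpow_le_rpow_of_exponent_ge hs hs1.le (by nlinarith)
    have h2 : |Real.log s| ≤ 4 * s ^ (-(1/4) : ℝ) := by
      rw [abs_of_nonpos (Real.log_nonpos hs.le hs1.le), ← Real.log_inv]
      have h3 := Real.log_le_rpow_div (inv_nonneg.mpr hs.le) (by norm_num : (0:ℝ) < 1/4)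
      rw [Real.inv_rpow hs.le, ← Real.rpow_neg hs.le] at h3
      have : -((1:ℝ)/4) = (-(1/4) : ℝ) := by norm_num
      rw [this] at h3
      linarith
    have hmul : s ^ (-β * 2) * (2 * |Real.log s|) ≤ s ^ (-(1/4) : ℝ) * (8 * s ^ (-(1/4) : ℝ)) := by
      have := mul_le_mul h1 (by linarith : 2 * |Real.log s| ≤ 8 * s ^ (-(1/4) : ℝ))
        (by positivity) (Real.rpow_nonneg hs.le _)
      linarith
    have hsq : s ^ (-(1/4) : ℝ) * s ^ (-(1/4) : ℝ) = s ^ (-(1/2) : ℝ) := by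
      rw [← Real.rpow_add hs]; norm_num
    nlinarith [Real.rpow_nonneg hs.le ((1:ℝ)/2), Real.rpow_nonneg hs.le (-(1/4) : ℝ)]

lemma aux_bound {d : ℕ} (f : SchwartzMap (EuclideanSpace ℝ (Fin d)) ℂ) :
    ∃ C : ℝ, 0 ≤ C ∧ ∀ x, ‖f x‖ ≤ C := by
  obtain ⟨C, hCpos, hC⟩ := f.decay 0 0
  refine ⟨C, hCpos.le, fun x => ?_⟩
  have := hC x
  simpa using this

lemma aux_intA {d : ℕ} (f : SchwartzMap (EuclideanSpace ℝ (Fin d)) ℂ) :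
    Integrable (fun x => ‖f x‖ ^ (2:ℝ)) volume := by
  obtain ⟨C, hC0, hC⟩ := aux_bound f
  refine Integrable.mono' (f.integrable.norm.const_mul C)
    ((f.continuous.norm.rpow_const (fun x => Or.inr (by norm_num))).aestronglyMeasurable)
    (Eventually.of_forall fun x => ?_)
  rw [Real.norm_eq_abs, abs_of_nonneg (Real.rpow_nonneg (norm_nonneg _) _),
    Real.rpow_two, sq]
  have := norm_nonneg (f x)
  nlinarith [hC x]

lemma aux_intB {d : ℕ} (f : SchwartzMap (EuclideanSpace ℝ (Fin d)) ℂ) :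
    Integrable (fun x => ‖f x‖ ^ (2:ℝ) * ‖x‖ ^ ((1:ℝ)/2)) volume := by
  obtain ⟨C, hC0, hC⟩ := aux_bound f
  refine Integrable.mono' ((aux_intA f).add ((f.integrable_pow_mul volume 1).const_mul C))
    (((f.continuous.norm.rpow_const (fun x => Or.inr (by norm_num))).mul
      (continuous_norm.rpow_const (fun x => Or.inr (by norm_num)))).aestronglyMeasurable)
    (Eventually.of_forall fun x => ?_)
  have h1 : ‖x‖ ^ ((1:ℝ)/2) ≤ 1 + ‖x‖ := by
    rcases le_or_gt ‖x‖ 1 with h | h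
    · have := Real.rpow_le_one (norm_nonneg x) h (by norm_num : (0:ℝ) ≤ 1/2)
      linarith [norm_nonneg x]
    · have h2 : ‖x‖ ^ ((1:ℝ)/2) ≤ ‖x‖ ^ (1:ℝ) :=
        Real.rpow_le_rpow_of_exponent_le h.le (by norm_num)
      rw [Real.rpow_one] at h2
      linarith
  have h2 : (0:ℝ) ≤ ‖f x‖ ^ (2:ℝ) := Real.rpow_nonneg (norm_nonneg _) _
  have h3 : ‖x‖ ^ ((1:ℝ)/2) ≥ 0 := Real.rpow_nonneg (norm_nonneg _) _
  rw [Real.norm_eq_abs, abs_of_nonneg (mul_nonneg h2 h3)]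
  have key : ‖f x‖ ^ (2:ℝ) * ‖x‖ ^ ((1:ℝ)/2) ≤ ‖f x‖ ^ (2:ℝ) * (1 + ‖x‖) :=
    mul_le_mul_of_nonneg_left h1 h2
  have expand : ‖f x‖ ^ (2:ℝ) * (1 + ‖x‖) ≤ ‖f x‖ ^ (2:ℝ) + C * (‖x‖ ^ 1 * ‖f x‖) := by
    rw [Real.rpow_two, sq, pow_one]
    have hfx := norm_nonneg (f x)
    have hx := norm_nonneg x
    nlinarith [mul_le_mul_of_nonneg_right (hC x) (mul_nonneg hx hfx)]
  calc ‖f x‖ ^ (2:ℝ) * ‖x‖ ^ ((1:ℝ)/2) ≤ ‖f x‖ ^ (2:ℝ) * (1 + ‖x‖) := key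
    _ ≤ ‖f x‖ ^ (2:ℝ) + C * (‖x‖ ^ 1 * ‖f x‖) := expand

lemma aux_intC {d : ℕ} (hd : 0 < d) (f : SchwartzMap (EuclideanSpace ℝ (Fin d)) ℂ) :
    Integrable (fun x => ‖f x‖ ^ (2:ℝ) * ‖x‖ ^ (-(1/2) : ℝ)) volume := by
  obtain ⟨C, hC0, hC⟩ := aux_bound f
  have hmeas : AEStronglyMeasurable
      (fun x : EuclideanSpace ℝ (Fin d) => ‖f x‖ ^ (2:ℝ) * ‖x‖ ^ (-(1/2) : ℝ)) volume := by
    refine AEStronglyMeasurable.mul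
      ((f.continuous.norm.rpow_const (fun x => Or.inr (by norm_num))).aestronglyMeasurable) ?_
    exact (show Measurable fun x : EuclideanSpace ℝ (Fin d) => ‖x‖ ^ (-(1/2) : ℝ) by
      fun_prop).aestronglyMeasurable
  rw [← integrableOn_univ, ← Set.union_compl_self (Metric.ball (0:EuclideanSpace ℝ (Fin d)) 1)]
  refine IntegrableOn.union ?_ ?_
  · refine Integrable.mono' ((aux_int_ball hd).const_mul (C * C)) hmeas.restrict
      (Eventually.of_forall fun x => ?_)
    have h3 : (0:ℝ) ≤ ‖x‖ ^ (-(1/2) : ℝ) := Real.rpow_nonneg (norm_nonneg _) _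
    have h2 : (0:ℝ) ≤ ‖f x‖ ^ (2:ℝ) := Real.rpow_nonneg (norm_nonneg _) _
    rw [Real.norm_eq_abs, abs_of_nonneg (mul_nonneg h2 h3)]
    refine mul_le_mul_of_nonneg_right ?_ h3
    rw [Real.rpow_two, sq]
    have := norm_nonneg (f x)
    nlinarith [hC x]
  · refine Integrable.mono' (aux_intA f).restrict hmeas.restrict ?_
    filter_upwards [ae_restrict_mem measurableSet_ball.compl] with x hx
    have hx1 : 1 ≤ ‖x‖ := by
      simp only [Set.mem_compl_iff, Metric.mem_ball, dist_zero_right, not_lt] at hx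
      exact hx
    have h3 : ‖x‖ ^ (-(1/2) : ℝ) ≤ 1 :=
      Real.rpow_le_one_of_one_le_of_nonpos hx1 (by norm_num)
    have h2 : (0:ℝ) ≤ ‖f x‖ ^ (2:ℝ) := Real.rpow_nonneg (norm_nonneg _) _
    have h4 : (0:ℝ) ≤ ‖x‖ ^ (-(1/2) : ℝ) := Real.rpow_nonneg (norm_nonneg _) _
    rw [Real.norm_eq_abs, abs_of_nonneg (mul_nonneg h2 h4)]
    simpa using mul_le_mul_of_nonneg_left h3 h2

/-- For a nonzero Schwartz function `f` on `ℝ^d` with `‖f‖₂ = 1`, the partial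
derivative of `β ↦ ‖|x|^{-β} f‖_{L^p} = (∫ ‖f x‖^p ‖x‖^{-βp} dx)^{1/p}` evaluated at
`p = 2`, `β = 0` equals `-∫ |f(x)|² log ‖x‖ dx`. -/
theorem deriv_in_beta_of_weighted_norm_at_zero {d : ℕ} (hd : 0 < d)
    (f : SchwartzMap (EuclideanSpace ℝ (Fin d)) ℂ) (hf0 : f ≠ 0)
    (hf2 : ∫ x, ‖f x‖ ^ (2 : ℝ) = 1) :
    HasDerivAt (fun β : ℝ => (∫ x, ‖f x‖ ^ (2 : ℝ) * ‖x‖ ^ (-β * 2)) ^ (1 / (2 : ℝ)))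
      (-∫ x, ‖f x‖ ^ (2 : ℝ) * Real.log ‖x‖) 0 := by
  haveI : Nonempty (Fin d) := ⟨⟨0, hd⟩⟩
  have hae : ∀ᵐ x : EuclideanSpace ℝ (Fin d), x ≠ 0 := by
    have h0 : (volume : Measure (EuclideanSpace ℝ (Fin d))) {0} = 0 := by
      have := Measure.addHaar_sphere (volume : Measure (EuclideanSpace ℝ (Fin d))) 0 0
      simpa using this
    rw [ae_iff]
    convert h0 using 2
    ext x
    simp
  have hF_meas : ∀ᶠ β in nhds (0:ℝ), AEStronglyMeasurable
      (fun x : EuclideanSpace ℝ (Fin d) => ‖f x‖ ^ (2:ℝ) * ‖x‖ ^ (-β * 2)) volume := by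
    refine Eventually.of_forall fun β => AEStronglyMeasurable.mul
      ((f.continuous.norm.rpow_const (fun x => Or.inr (by norm_num))).aestronglyMeasurable) ?_
    exact (show Measurable fun x : EuclideanSpace ℝ (Fin d) => ‖x‖ ^ (-β * 2) by
      fun_prop).aestronglyMeasurable
  have hF_int : Integrable
      (fun x : EuclideanSpace ℝ (Fin d) => ‖f x‖ ^ (2:ℝ) * ‖x‖ ^ (-(0:ℝ) * 2)) volume := by
    have heq : (fun x : EuclideanSpace ℝ (Fin d) => ‖f x‖ ^ (2:ℝ) * ‖x‖ ^ (-(0:ℝ) * 2))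
        = fun x => ‖f x‖ ^ (2:ℝ) := by
      funext x
      simp
    rw [heq]
    exact aux_intA f
  have hF'_meas : AEStronglyMeasurable (fun x : EuclideanSpace ℝ (Fin d) =>
      ‖f x‖ ^ (2:ℝ) * (‖x‖ ^ (-(0:ℝ) * 2) * (-2 * Real.log ‖x‖))) volume := by
    refine AEStronglyMeasurable.mul
      ((f.continuous.norm.rpow_const (fun x => Or.inr (by norm_num))).aestronglyMeasurable) ?_
    have hm1 : Measurable fun x : EuclideanSpace ℝ (Fin d) => ‖x‖ ^ (-(0:ℝ) * 2) := by fun_prop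
    have hm2 : Measurable fun x : EuclideanSpace ℝ (Fin d) => (-2 : ℝ) * Real.log ‖x‖ :=
      (Real.measurable_log.comp measurable_norm).const_mul (-2)
    exact (hm1.mul hm2).aestronglyMeasurable
  have h_bound : ∀ᵐ x : EuclideanSpace ℝ (Fin d), ∀ β ∈ Metric.ball (0:ℝ) (1/8),
      ‖‖f x‖ ^ (2:ℝ) * (‖x‖ ^ (-β * 2) * (-2 * Real.log ‖x‖))‖
        ≤ ‖f x‖ ^ (2:ℝ) * (8 * (‖x‖ ^ ((1:ℝ)/2) + ‖x‖ ^ (-(1/2) : ℝ))) := by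
    filter_upwards [hae] with x hx
    intro β hβ
    have hs : 0 < ‖x‖ := norm_pos_iff.mpr hx
    have hβ' : |β| < 1/8 := by
      simpa [Real.dist_eq] using Metric.mem_ball.mp hβ
    have h2 : (0:ℝ) ≤ ‖f x‖ ^ (2:ℝ) := Real.rpow_nonneg (norm_nonneg _) _
    have hb : (0:ℝ) ≤ ‖x‖ ^ (-β * 2) := Real.rpow_nonneg (norm_nonneg _) _
    have habs : |(-2 : ℝ) * Real.log ‖x‖| = 2 * |Real.log ‖x‖| := by
      rw [abs_mul]
      norm_num
    rw [Real.norm_eq_abs, abs_mul, abs_mul, habs, abs_of_nonneg h2, abs_of_nonneg hb]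
    exact mul_le_mul_of_nonneg_left (aux_ptwise hs hβ') h2
  have bound_int : Integrable (fun x : EuclideanSpace ℝ (Fin d) =>
      ‖f x‖ ^ (2:ℝ) * (8 * (‖x‖ ^ ((1:ℝ)/2) + ‖x‖ ^ (-(1/2) : ℝ)))) volume := by
    have heq : (fun x : EuclideanSpace ℝ (Fin d) =>
        ‖f x‖ ^ (2:ℝ) * (8 * (‖x‖ ^ ((1:ℝ)/2) + ‖x‖ ^ (-(1/2) : ℝ))))
        = fun x => 8 * (‖f x‖ ^ (2:ℝ) * ‖x‖ ^ ((1:ℝ)/2))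
            + 8 * (‖f x‖ ^ (2:ℝ) * ‖x‖ ^ (-(1/2) : ℝ)) := by
      funext x
      ring
    rw [heq]
    exact ((aux_intB f).const_mul 8).add ((aux_intC hd f).const_mul 8)
  have h_diff : ∀ᵐ x : EuclideanSpace ℝ (Fin d), ∀ β ∈ Metric.ball (0:ℝ) (1/8),
      HasDerivAt (fun β : ℝ => ‖f x‖ ^ (2:ℝ) * ‖x‖ ^ (-β * 2))
        (‖f x‖ ^ (2:ℝ) * (‖x‖ ^ (-β * 2) * (-2 * Real.log ‖x‖))) β := by
    filter_upwards [hae] with x hx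
    intro β _
    have hs : 0 < ‖x‖ := norm_pos_iff.mpr hx
    have h₁ : HasDerivAt (fun y : ℝ => ‖x‖ ^ y) (‖x‖ ^ (-β * 2) * Real.log ‖x‖) (-β * 2) :=
      (Real.hasStrictDerivAt_const_rpow hs (-β * 2)).hasDerivAt
    have h₂ : HasDerivAt (fun β : ℝ => -β * 2) (-1 * 2) β :=
      (hasDerivAt_id β).neg.mul_const 2
    have h₃ := (HasDerivAt.comp β h₁ h₂).const_mul (‖f x‖ ^ (2:ℝ))
    simp only [Function.comp] at h₃
    refine h₃.congr_deriv ?_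
    ring
  obtain ⟨-, hderiv⟩ := hasDerivAt_integral_of_dominated_loc_of_deriv_le
    (Metric.ball_mem_nhds 0 (show (0:ℝ) < 1/8 by norm_num)) hF_meas hF_int hF'_meas h_bound bound_int h_diff
  have hval : (∫ x : EuclideanSpace ℝ (Fin d),
      ‖f x‖ ^ (2:ℝ) * (‖x‖ ^ (-(0:ℝ) * 2) * (-2 * Real.log ‖x‖)))
      = -2 * ∫ x : EuclideanSpace ℝ (Fin d), ‖f x‖ ^ (2:ℝ) * Real.log ‖x‖ := by
    have hptw : ∀ x : EuclideanSpace ℝ (Fin d),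
        ‖f x‖ ^ (2:ℝ) * (‖x‖ ^ (-(0:ℝ) * 2) * (-2 * Real.log ‖x‖))
          = -2 * (‖f x‖ ^ (2:ℝ) * Real.log ‖x‖) := by
      intro x
      have h0 : (-(0:ℝ) * 2) = 0 := by ring
      rw [h0, Real.rpow_zero]
      ring
    simp only [hptw]
    rw [integral_const_mul]
  rw [hval] at hderiv
  have hF0 : (∫ x : EuclideanSpace ℝ (Fin d), ‖f x‖ ^ (2:ℝ) * ‖x‖ ^ (-(0:ℝ) * 2)) = 1 := by
    have heq : (fun x : EuclideanSpace ℝ (Fin d) => ‖f x‖ ^ (2:ℝ) * ‖x‖ ^ (-(0:ℝ) * 2))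
        = fun x => ‖f x‖ ^ (2:ℝ) := by
      funext x
      simp
    rw [heq]
    exact hf2
  have final := hderiv.rpow_const (p := 1/(2:ℝ)) (Or.inl (by rw [hF0]; norm_num))
  convert final using 1
  rw [hF0, Real.one_rpow]
  ring
end

section
/- For p ≥ 1 and a Schwartz function f on ℝ^d, the derivative of p ↦ ‖f‖_{L^p} equals ‖f‖_p · ( −(1/p²) log(‖f‖_p^p) + (1/p) · (∫ |f|^p log|f| dx) / ‖f‖_p^p ), provided f is not identically zero. -/
open MeasureTheory Real

private lemma schwartz_integrable_rpow {d : ℕ}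
    (f : SchwartzMap (EuclideanSpace ℝ (Fin d)) ℂ) {r : ℝ} (hr : 0 < r) :
    Integrable (fun x => ‖f x‖ ^ r) := by
  -- choose k with k * r > d
  obtain ⟨k, hk⟩ : ∃ k : ℕ, (d : ℝ) < k * r := by
    obtain ⟨k, hk⟩ := exists_nat_gt (((d : ℝ) + 1) / r)
    refine ⟨k, ?_⟩
    have := (div_lt_iff₀ hr).mp hk
    linarith
  set C : ℝ := 2 ^ k * (Finset.Iic ((k : ℕ), (0 : ℕ))).sup
      (fun m => SchwartzMap.seminorm ℝ m.1 m.2) f with hC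
  have hC0 : 0 ≤ C := by positivity
  have hbound : ∀ x, ‖f x‖ ≤ C * (1 + ‖x‖) ^ (-(k : ℝ)) := by
    intro x
    have h := SchwartzMap.one_add_le_sup_seminorm_apply (𝕜 := ℝ) (m := ((k : ℕ), 0))
      le_rfl le_rfl f x
    rw [norm_iteratedFDeriv_zero] at h
    have h1 : (0 : ℝ) < 1 + ‖x‖ := by positivity
    have h2 : (1 + ‖x‖) ^ (-(k : ℝ)) = ((1 + ‖x‖) ^ k)⁻¹ := by
      rw [Real.rpow_neg h1.le, Real.rpow_natCast]
    rw [h2, mul_comm C, ← div_eq_inv_mul, le_div_iff₀ (by positivity)]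
    calc ‖f x‖ * (1 + ‖x‖) ^ k = (1 + ‖x‖) ^ k * ‖f x‖ := by ring
      _ ≤ C := by simpa [hC] using h
  have hint : Integrable (fun x : EuclideanSpace ℝ (Fin d) =>
      C ^ r * (1 + ‖x‖) ^ (-((k : ℝ) * r))) := by
    apply Integrable.const_mul
    apply integrable_one_add_norm
    rwa [finrank_euclideanSpace_fin]
  apply hint.mono'
  · exact ((f.continuous.norm.rpow_const fun x => Or.inr hr.le)).aestronglyMeasurable
  · refine Filter.Eventually.of_forall fun x => ?_
    have h1 : (0 : ℝ) < 1 + ‖x‖ := by positivity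
    rw [Real.norm_eq_abs, abs_of_nonneg (Real.rpow_nonneg (norm_nonneg _) r)]
    calc ‖f x‖ ^ r ≤ (C * (1 + ‖x‖) ^ (-(k : ℝ))) ^ r :=
          Real.rpow_le_rpow (norm_nonneg _) (hbound x) hr.le
      _ = C ^ r * (1 + ‖x‖) ^ (-((k : ℝ) * r)) := by
          rw [Real.mul_rpow hC0 (Real.rpow_nonneg h1.le _), ← Real.rpow_mul h1.le]
          congr 1
          ring

private lemma hasDerivAt_rpow_exponent {a : ℝ} (ha : 0 ≤ a) {q : ℝ} (hq : 0 < q) :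
    HasDerivAt (fun t : ℝ => a ^ t) (a ^ q * Real.log a) q := by
  rcases ha.eq_or_lt with h | h
  · have h0 : a = 0 := h.symm
    subst h0
    rw [Real.zero_rpow hq.ne', Real.log_zero, zero_mul]
    apply (hasDerivAt_const q (0 : ℝ)).congr_of_eventuallyEq
    filter_upwards [eventually_gt_nhds hq] with t ht
    rw [Real.zero_rpow ht.ne']
  · exact (Real.hasStrictDerivAt_const_rpow h q).hasDerivAt

private lemma rpow_log_abs_bound {a q p : ℝ} (ha : 0 ≤ a) (hp : 1 ≤ p)
    (hq : |q - p| < 1 / 4) :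
    |a ^ q * Real.log a| ≤ 4 * (a ^ (p - 1 / 2) + a ^ (p + 1 / 2)) := by
  have hq1 : p - 1 / 4 ≤ q := by cases abs_lt.mp hq; linarith
  have hq2 : q ≤ p + 1 / 4 := by cases abs_lt.mp hq; linarith
  have hq0 : 0 < q := by linarith
  rcases ha.eq_or_lt with h | h
  · rw [← h, Real.zero_rpow hq0.ne', zero_mul, abs_zero]
    positivity
  rcases le_total a 1 with h1 | h1
  · -- a ≤ 1 : |log a| = -log a ≤ 4 a^{-1/4}
    have hlog : Real.log a ≤ 0 := Real.log_nonpos h.le h1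
    have hlog2 : -Real.log a ≤ 4 * a ^ (-(1 / 4) : ℝ) := by
      have := Real.log_le_rpow_div (x := a⁻¹) (by positivity) (by norm_num : (0:ℝ) < 1/4)
      rw [Real.log_inv, Real.inv_rpow h.le, ← Real.rpow_neg h.le] at this
      linarith [this]
    have hmono : a ^ q ≤ a ^ (p - 1 / 4) :=
      Real.rpow_le_rpow_of_exponent_ge h h1 hq1
    have hnn : 0 ≤ a ^ q := Real.rpow_nonneg ha q
    calc |a ^ q * Real.log a| = a ^ q * (-Real.log a) := by
          rw [abs_mul, abs_of_nonneg hnn, abs_of_nonpos hlog]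
      _ ≤ a ^ (p - 1 / 4) * (4 * a ^ (-(1 / 4) : ℝ)) := by
          apply mul_le_mul hmono hlog2 (by linarith) (Real.rpow_nonneg ha _)
      _ = 4 * a ^ (p - 1 / 2) := by
          rw [show a ^ (p - 1/4) * (4 * a ^ (-(1/4) : ℝ)) =
              4 * (a ^ (p - 1/4) * a ^ (-(1/4) : ℝ)) from by ring, ← Real.rpow_add h]
          congr 1
          ring
      _ ≤ 4 * (a ^ (p - 1 / 2) + a ^ (p + 1 / 2)) := by
          have := Real.rpow_nonneg ha (p + 1 / 2); linarith
  · -- 1 ≤ a : |log a| = log a ≤ 4 a^{1/4}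
    have hlog : 0 ≤ Real.log a := Real.log_nonneg h1
    have hlog2 : Real.log a ≤ 4 * a ^ ((1 / 4) : ℝ) := by
      have := Real.log_le_rpow_div ha (by norm_num : (0:ℝ) < 1/4)
      linarith [this]
    have hmono : a ^ q ≤ a ^ (p + 1 / 4) :=
      Real.rpow_le_rpow_of_exponent_le h1 hq2
    have hnn : 0 ≤ a ^ q := Real.rpow_nonneg ha q
    calc |a ^ q * Real.log a| = a ^ q * Real.log a := by
          rw [abs_mul, abs_of_nonneg hnn, abs_of_nonneg hlog]
      _ ≤ a ^ (p + 1 / 4) * (4 * a ^ ((1 / 4) : ℝ)) := by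
          apply mul_le_mul hmono hlog2 hlog (Real.rpow_nonneg ha _)
      _ = 4 * a ^ (p + 1 / 2) := by
          rw [show a ^ (p + 1/4) * (4 * a ^ ((1/4) : ℝ)) =
              4 * (a ^ (p + 1/4) * a ^ ((1/4) : ℝ)) from by ring, ← Real.rpow_add h]
          congr 1
          ring
      _ ≤ 4 * (a ^ (p - 1 / 2) + a ^ (p + 1 / 2)) := by
          have := Real.rpow_nonneg ha (p - 1 / 2); linarith

/-- For `p ≥ 1` and a nonzero Schwartz function `f` on `ℝ^d`, the derivative of
`p ↦ ‖f‖_{L^p} = (∫ ‖f‖^p)^{1/p}` equals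
`‖f‖_p * ( -(1/p²) log(‖f‖_p^p) + (1/p) (∫ ‖f‖^p log ‖f‖) / ‖f‖_p^p )`. -/
theorem deriv_Lp_norm_in_p {d : ℕ} (hd : 0 < d)
    (f : SchwartzMap (EuclideanSpace ℝ (Fin d)) ℂ) (hf0 : f ≠ 0)
    (p : ℝ) (hp : 1 ≤ p) :
    HasDerivAt (fun q : ℝ => (∫ x, ‖f x‖ ^ q) ^ (1 / q))
      ((∫ x, ‖f x‖ ^ p) ^ (1 / p) *
        (-(1 / p ^ 2) * Real.log (((∫ x, ‖f x‖ ^ p) ^ (1 / p)) ^ p)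
          + (1 / p) * (∫ x, ‖f x‖ ^ p * Real.log ‖f x‖)
              / ((∫ x, ‖f x‖ ^ p) ^ (1 / p)) ^ p)) p := by
  have hp0 : (0 : ℝ) < p := by linarith
  -- differentiate under the integral
  have key := hasDerivAt_integral_of_dominated_loc_of_deriv_le
    (μ := (volume : Measure (EuclideanSpace ℝ (Fin d))))
    (F := fun q x => ‖f x‖ ^ q) (F' := fun q x => ‖f x‖ ^ q * Real.log ‖f x‖)
    (x₀ := p) (bound := fun x => 4 * (‖f x‖ ^ (p - 1 / 2) + ‖f x‖ ^ (p + 1 / 2)))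
    (Metric.ball_mem_nhds p (by norm_num : (0:ℝ) < 1/4))
    (by
      filter_upwards [eventually_gt_nhds hp0] with q hq
      exact (f.continuous.norm.rpow_const fun x => Or.inr hq.le).aestronglyMeasurable)
    (schwartz_integrable_rpow f hp0)
    (by
      exact ((f.continuous.norm.rpow_const fun x => Or.inr hp0.le).measurable.mul
        (Real.measurable_log.comp f.continuous.norm.measurable)).aestronglyMeasurable)
    (by
      refine Filter.Eventually.of_forall fun x q hq => ?_
      rw [Real.norm_eq_abs]
      exact rpow_log_abs_bound (norm_nonneg _) hp (by simpa [Real.dist_eq] using hq))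
    (by
      exact ((schwartz_integrable_rpow f (by linarith)).add
        (schwartz_integrable_rpow f (by linarith))).const_mul 4)
    (by
      refine Filter.Eventually.of_forall fun x q hq => ?_
      have hq0 : 0 < q := by
        have := abs_lt.mp (by simpa [Real.dist_eq] using hq)
        linarith [this.1, this.2]
      exact hasDerivAt_rpow_exponent (norm_nonneg _) hq0)
  obtain ⟨-, hderiv⟩ := key
  set Fp : ℝ := ∫ x, ‖f x‖ ^ p with hFp
  -- positivity of the integral
  have hFpos : 0 < Fp := by
    rw [hFp, integral_pos_iff_support_of_nonneg
      (fun x => Real.rpow_nonneg (norm_nonneg _) p) (schwartz_integrable_rpow f hp0)]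
    obtain ⟨x₀, hx₀⟩ : ∃ x, f x ≠ 0 := by
      by_contra hcon
      push_neg at hcon
      exact hf0 (SchwartzMap.ext fun x => by simpa using hcon x)
    have hsub : {x | f x ≠ 0} ⊆ Function.support fun x => ‖f x‖ ^ p := by
      intro x hx
      have : (0:ℝ) < ‖f x‖ := norm_pos_iff.mpr hx
      exact (Real.rpow_pos_of_pos this p).ne'
    refine lt_of_lt_of_le ?_ (measure_mono hsub)
    exact (isOpen_ne_fun f.continuous continuous_const).measure_pos volume ⟨x₀, hx₀⟩
  have hinv : HasDerivAt (fun q : ℝ => 1 / q) (-(1 / p ^ 2)) p := by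
    simpa [one_div] using hasDerivAt_inv hp0.ne'
  have h := hderiv.rpow hinv hFpos
  -- simplify the stated derivative
  have hpow : (Fp ^ (1 / p)) ^ p = Fp := by
    rw [← Real.rpow_mul hFpos.le, one_div, inv_mul_cancel₀ hp0.ne', Real.rpow_one]
  convert h using 1
  beta_reduce
  rw [hpow, ← hFp, Real.rpow_sub hFpos, Real.rpow_one]
  field_simp
  ring
end
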